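/- For monomial ideals $I, J \subseteq S$, the expansion operator satisfies $(I \cap J)^* = I^* \cap J^*$. -/

import Mathlib

open MvPolynomial


/-- The monomial ideal of `S = K[x_1,…,x_n]` generated by the monomials `x^a`, `a ∈ A`. -/
noncomputable def monIdeal (K : Type*) [Field K] {n : ℕ} (A : Set (Fin n → ℕ)) :
    Ideal (MvPolynomial (Fin n) K) :=
  Ideal.span ((fun a => ∏ j, (X j : MvPolynomial (Fin n) K) ^ a j) '' A)

/-- The expansion `I^* = ∑_{a ∈ A} P_1^{a(1)} ⋯ P_n^{a(n)} ⊆ S^*` of the monomial ideal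
generated by the monomials `x^a`, `a ∈ A`, with respect to the tuple `(i_1,…,i_n)`;
here `P_j = (x_{j1},…,x_{j i_j})`. -/
noncomputable def expIdeal (K : Type*) [Field K] {n : ℕ} (iv : Fin n → ℕ)
    (A : Set (Fin n → ℕ)) : Ideal (MvPolynomial ((j : Fin n) × Fin (iv j)) K) :=
  ⨆ a ∈ A, ∏ j, (Ideal.span (Set.range fun k : Fin (iv j) =>
      (X ⟨j, k⟩ : MvPolynomial ((j : Fin n) × Fin (iv j)) K))) ^ a j

/-- The `K`-algebra homomorphism `π : S^* → S`, `x_{jk} ↦ x_j`. -/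
noncomputable def piHom (K : Type*) [Field K] {n : ℕ} (iv : Fin n → ℕ) :
    MvPolynomial ((j : Fin n) × Fin (iv j)) K →ₐ[K] MvPolynomial (Fin n) K :=
  aeval fun p => X p.1

section Helpers

/-- A monomial written as a product over all variables of a finite type. -/
lemma prod_X_pow_univ {σ : Type*} [Fintype σ] {R : Type*} [CommSemiring R] (s : σ →₀ ℕ) :
    ∏ j, (X j : MvPolynomial σ R) ^ s j = monomial s 1 := by
  rw [← prod_X_pow_eq_monomial]
  exact (Finset.prod_subset (Finset.subset_univ _) (fun x _ h => by
    simp [Finsupp.notMem_support_iff.mp h])).symm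

variable (K : Type*) [Field K] {n : ℕ}

/-- Membership of a monomial in a monomial ideal. -/
lemma mem_monIdeal_iff (A : Set (Fin n → ℕ)) (b : Fin n → ℕ) :
    (∏ j, (X j : MvPolynomial (Fin n) K) ^ b j) ∈ monIdeal K A ↔
      ∃ a ∈ A, ∀ j, a j ≤ b j := by
  have himg : ((fun a => ∏ j, (X j : MvPolynomial (Fin n) K) ^ a j) '' A) =
      (fun s => monomial s (1 : K)) '' (Finsupp.equivFunOnFinite.symm '' A) := by
    rw [Set.image_image]
    refine Set.image_congr' fun a => ?_
    rw [← prod_X_pow_univ]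
    exact Finset.prod_congr rfl fun j _ => by
      rfl
  have hb : (∏ j, (X j : MvPolynomial (Fin n) K) ^ b j)
      = monomial (Finsupp.equivFunOnFinite.symm b) (1 : K) := by
    rw [← prod_X_pow_univ]; rfl
  rw [monIdeal, himg, hb, mem_ideal_span_monomial_image]
  classical
  rw [support_monomial, if_neg one_ne_zero]
  constructor
  · intro h
    obtain ⟨si, ⟨a, ha, rfl⟩, hle⟩ := h _ (Finset.mem_singleton_self _)
    exact ⟨a, ha, fun j => by simpa using hle j⟩
  · rintro ⟨a, ha, hle⟩ xi hxi
    rw [Finset.mem_singleton] at hxi; subst hxi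
    refine ⟨_, ⟨a, ha, rfl⟩, ?_⟩
    intro j
    simpa using hle j

variable (iv : Fin n → ℕ)

local notation "Sstar" => MvPolynomial ((j : Fin n) × Fin (iv j)) K

/-- Column-degree is additive. -/
lemma colSum_add (j : Fin n) (a b : ((j : Fin n) × Fin (iv j)) →₀ ℕ) :
    (∑ k, (a + b) ⟨j, k⟩) = (∑ k, a ⟨j, k⟩) + ∑ k, b ⟨j, k⟩ := by
  simp [Finsupp.add_apply, Finset.sum_add_distrib]

/-- Elements of `P_j` have column-`j` degree at least `1` in every monomial. -/
lemma mem_span_X_colSum (j : Fin n) {p : Sstar}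
    (hp : p ∈ Ideal.span (Set.range fun k : Fin (iv j) =>
      (X ⟨j, k⟩ : Sstar))) :
    ∀ e ∈ p.support, 1 ≤ ∑ k, e ⟨j, k⟩ := by
  classical
  refine Submodule.span_induction ?_ ?_ ?_ ?_ hp
  · rintro x ⟨k, rfl⟩ e he
    rw [support_X, Finset.mem_singleton] at he
    subst he
    calc (1 : ℕ) = (Finsupp.single (⟨j, k⟩ : (j : Fin n) × Fin (iv j)) 1) ⟨j, k⟩ := by simp
      _ ≤ ∑ k', (Finsupp.single (⟨j, k⟩ : (j : Fin n) × Fin (iv j)) 1) ⟨j, k'⟩ :=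
          Finset.single_le_sum (f := fun k' =>
            (Finsupp.single (⟨j, k⟩ : (j : Fin n) × Fin (iv j)) 1) ⟨j, k'⟩)
            (fun _ _ => Nat.zero_le _) (Finset.mem_univ k)
  · simp
  · intro x y _ _ hx hy e he
    rcases Finset.mem_union.mp (support_add he) with h | h
    · exact hx e h
    · exact hy e h
  · intro a x _ hx e he
    rw [smul_eq_mul] at he
    obtain ⟨e1, he1, e2, he2, rfl⟩ := Finset.mem_add.mp (support_mul _ _ he)
    rw [colSum_add]
    exact le_add_left (hx e2 he2)

/-- Elements of `P_j ^ m` have column-`j` degree at least `m` in every monomial. -/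
lemma mem_pow_span_X_colSum (j : Fin n) (m : ℕ) {p : Sstar}
    (hp : p ∈ (Ideal.span (Set.range fun k : Fin (iv j) =>
      (X ⟨j, k⟩ : Sstar))) ^ m) :
    ∀ e ∈ p.support, m ≤ ∑ k, e ⟨j, k⟩ := by
  classical
  induction m generalizing p with
  | zero => exact fun e _ => Nat.zero_le _
  | succ m ih =>
    rw [pow_succ] at hp
    refine Submodule.mul_induction_on hp ?_ ?_
    · intro x hx y hy e he
      obtain ⟨e1, he1, e2, he2, rfl⟩ := Finset.mem_add.mp (support_mul _ _ he)
      rw [colSum_add]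
      exact Nat.add_le_add (ih hx e1 he1) (mem_span_X_colSum K iv j hy e2 he2)
    · intro x y hx hy e he
      rcases Finset.mem_union.mp (support_add he) with h | h
      · exact hx e h
      · exact hy e h

/-- A monomial whose column degrees dominate `c` lies in `∏ⱼ Pⱼ^{c j}`. -/
lemma monomial_mem_prod (c : Fin n → ℕ) (e : ((j : Fin n) × Fin (iv j)) →₀ ℕ)
    (hce : ∀ j, c j ≤ ∑ k, e ⟨j, k⟩) :
    monomial e (1 : K) ∈ ∏ j, (Ideal.span (Set.range fun k : Fin (iv j) =>
      (X ⟨j, k⟩ : Sstar))) ^ c j := by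
  rw [← prod_X_pow_univ, ← Finset.univ_sigma_univ, Finset.prod_sigma]
  refine Ideal.prod_mem_prod (fun j _ => ?_)
  refine Ideal.pow_le_pow_right (hce j) ?_
  rw [← Finset.prod_pow_eq_pow_sum]
  exact Ideal.prod_mem_prod fun k _ => Ideal.pow_mem_pow (Ideal.subset_span (Set.mem_range_self k)) _

/-- Every monomial of an element of `expIdeal A` dominates some `a ∈ A` in column degrees. -/
lemma expIdeal_support (A : Set (Fin n → ℕ)) {f : Sstar} (hf : f ∈ expIdeal K iv A) :
    ∀ e ∈ f.support, ∃ a ∈ A, ∀ j, a j ≤ ∑ k, e ⟨j, k⟩ := by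
  classical
  rw [expIdeal, iSup_subtype'] at hf
  refine Submodule.iSup_induction (motive := fun x : Sstar =>
    ∀ e ∈ x.support, ∃ a ∈ A, ∀ j, a j ≤ ∑ k, e ⟨j, k⟩) _ hf ?_ ?_ ?_
  · rintro ⟨a, ha⟩ x hx e he
    refine ⟨a, ha, fun j => ?_⟩
    have hle : (∏ j, (Ideal.span (Set.range fun k : Fin (iv j) =>
        (X ⟨j, k⟩ : Sstar))) ^ a j) ≤
        (Ideal.span (Set.range fun k : Fin (iv j) => (X ⟨j, k⟩ : Sstar))) ^ a j :=
      le_trans Ideal.prod_le_inf (Finset.inf_le (Finset.mem_univ j))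
    exact mem_pow_span_X_colSum K iv j (a j) (hle hx) e he
  · simp
  · intro x y hx hy e he
    rcases Finset.mem_union.mp (support_add he) with h | h
    · exact hx e h
    · exact hy e h

/-- Monotonicity of finite products of ideals. -/
lemma idealProd_mono {R : Type*} [CommSemiring R] {ι : Type*} (s : Finset ι)
    (f g : ι → Ideal R) (h : ∀ i ∈ s, f i ≤ g i) :
    ∏ i ∈ s, f i ≤ ∏ i ∈ s, g i := by
  classical
  induction s using Finset.induction with
  | empty => simp
  | insert _ _ hx ih =>
    rw [Finset.prod_insert hx, Finset.prod_insert hx]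
    exact Ideal.mul_mono (h _ (Finset.mem_insert_self _ _))
      (ih fun i hi => h i (Finset.mem_insert_of_mem hi))

/-- One half of the monotone comparison: if every generator of `C` dominates a generator of
`A`, the expansion of `C` is contained in that of `A`. -/
lemma expIdeal_le (A C : Set (Fin n → ℕ)) (h : monIdeal K C ≤ monIdeal K A) :
    expIdeal K iv C ≤ expIdeal K iv A := by
  rw [expIdeal, expIdeal]
  refine iSup₂_le fun c hc => ?_
  have hcA : (∏ j, (X j : MvPolynomial (Fin n) K) ^ c j) ∈ monIdeal K A :=
    h (Ideal.subset_span (Set.mem_image_of_mem _ hc))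
  obtain ⟨a, ha, hle⟩ := (mem_monIdeal_iff K A c).mp hcA
  refine le_trans ?_ (le_iSup₂ (f := fun a (_ : a ∈ A) =>
    ∏ j, (Ideal.span (Set.range fun k : Fin (iv j) =>
      (X ⟨j, k⟩ : Sstar))) ^ a j) a ha)
  exact idealProd_mono _ _ _ fun j _ => Ideal.pow_le_pow_right (hle j)

end Helpers

theorem expIdeal_inf (K : Type*) [Field K] {n : ℕ} (iv : Fin n → ℕ)
    (hiv : ∀ j, 0 < iv j) (A B C : Set (Fin n → ℕ))
    (hC : monIdeal K C = monIdeal K A ⊓ monIdeal K B) :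
    expIdeal K iv C = expIdeal K iv A ⊓ expIdeal K iv B := by
  refine le_antisymm (le_inf
    (expIdeal_le K iv A C (hC ▸ inf_le_left))
    (expIdeal_le K iv B C (hC ▸ inf_le_right))) ?_
  rintro f ⟨hfA, hfB⟩
  rw [f.as_sum]
  refine Ideal.sum_mem _ fun e he => ?_
  rw [show monomial e (coeff e f) = MvPolynomial.C (coeff e f) * monomial e 1 by
    rw [C_mul_monomial, mul_one]]
  refine Ideal.mul_mem_left _ _ ?_
  obtain ⟨a, ha, hae⟩ := expIdeal_support K iv A hfA e he
  obtain ⟨b, hb, hbe⟩ := expIdeal_support K iv B hfB e he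
  set bv : Fin n → ℕ := fun j => ∑ k, e ⟨j, k⟩ with hbv
  have hbvC : (∏ j, (X j : MvPolynomial (Fin n) K) ^ bv j) ∈ monIdeal K C := by
    rw [hC]
    exact ⟨(mem_monIdeal_iff K A bv).mpr ⟨a, ha, hae⟩,
      (mem_monIdeal_iff K B bv).mpr ⟨b, hb, hbe⟩⟩
  obtain ⟨c, hc, hce⟩ := (mem_monIdeal_iff K C bv).mp hbvC
  rw [expIdeal]
  refine (le_iSup₂ (f := fun c (_ : c ∈ C) =>
    ∏ j, (Ideal.span (Set.range fun k : Fin (iv j) =>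
      (X ⟨j, k⟩ : MvPolynomial ((j : Fin n) × Fin (iv j)) K))) ^ c j) c hc) ?_
  exact monomial_mem_prod K iv c e hce
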